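/- Every fingerprint of s is the fingerprint of some maximal location: for every f ∈ F there exists ⟨k,l⟩ ∈ L with C_s(k,l) = f. Consequently |F| ≤ |L|. -/

import Mathlib

/-- The fingerprint `C_s(i,j)`: the set of distinct letters occurring in `s_i … s_j`. -/
def fingerprint {α : Type*} [DecidableEq α] (s : ℕ → α) (i j : ℕ) : Finset α :=
  (Finset.Icc i j).image s

/-- `⟨i,j⟩` is a maximal location of the sequence `s_1 … s_n`. -/
def IsMaxLoc {α : Type*} [DecidableEq α] (s : ℕ → α) (n i j : ℕ) : Prop :=
  1 ≤ i ∧ i ≤ j ∧ j ≤ n ∧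
    (1 < i → s (i - 1) ∉ fingerprint s i j) ∧
    (j < n → s (j + 1) ∉ fingerprint s i j)

/-- The set `F` of all fingerprints of substrings of `s_1 … s_n`. -/
def Fings {α : Type*} [DecidableEq α] (s : ℕ → α) (n : ℕ) : Set (Finset α) :=
  {f | ∃ i j, 1 ≤ i ∧ i ≤ j ∧ j ≤ n ∧ fingerprint s i j = f}

lemma fingerprint_succ_right {α : Type*} [DecidableEq α] (s : ℕ → α) {i j : ℕ}
    (h : i ≤ j + 1) : fingerprint s i (j + 1) = insert (s (j + 1)) (fingerprint s i j) := by
  rw [fingerprint, fingerprint, ← Finset.insert_Icc_right_eq_Icc_add_one h, Finset.image_insert]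

lemma fingerprint_pred_left {α : Type*} [DecidableEq α] (s : ℕ → α) {i j : ℕ}
    (hi : 1 ≤ i) (h : i - 1 ≤ j) :
    fingerprint s (i - 1) j = insert (s (i - 1)) (fingerprint s i j) := by
  obtain ⟨i, rfl⟩ := Nat.exists_eq_add_of_le hi
  simp only [Nat.add_sub_cancel_left] at h ⊢
  rw [fingerprint, fingerprint, Nat.add_comm, ← Finset.insert_Icc_add_one_left_eq_Icc h,
    Finset.image_insert]

/-- Extend right end maximally. -/
lemma extend_right {α : Type*} [DecidableEq α] (s : ℕ → α) (n : ℕ) :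
    ∀ i j, i ≤ j → j ≤ n →
      ∃ l, j ≤ l ∧ l ≤ n ∧ fingerprint s i l = fingerprint s i j ∧
        (l < n → s (l + 1) ∉ fingerprint s i l) := by
  intro i j hij hjn
  obtain ⟨m, hn⟩ : ∃ m, n - j ≤ m := ⟨n - j, le_rfl⟩
  induction m generalizing j with
  | zero =>
    exact ⟨j, le_rfl, hjn, rfl, fun h => absurd (Nat.sub_pos_of_lt h) (by omega)⟩
  | succ m ih =>
    by_cases hmem : j < n ∧ s (j + 1) ∈ fingerprint s i j
    · obtain ⟨hjn', hmem⟩ := hmem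
      have hfp : fingerprint s i (j + 1) = fingerprint s i j := by
        rw [fingerprint_succ_right s (by omega), Finset.insert_eq_self.mpr hmem]
      obtain ⟨l, hl1, hl2, hl3, hl4⟩ := ih (j + 1) (by omega) (by omega) (by omega)
      exact ⟨l, by omega, hl2, hl3.trans hfp, hl4⟩
    · push_neg at hmem
      refine ⟨j, le_rfl, hjn, rfl, fun h => hmem h⟩

/-- Extend left end maximally. -/
lemma extend_left {α : Type*} [DecidableEq α] (s : ℕ → α) :
    ∀ i j, 1 ≤ i → i ≤ j →
      ∃ k, 1 ≤ k ∧ k ≤ i ∧ fingerprint s k j = fingerprint s i j ∧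
        (1 < k → s (k - 1) ∉ fingerprint s k j) := by
  intro i j hi hij
  obtain ⟨m, hn⟩ : ∃ m, i - 1 ≤ m := ⟨i - 1, le_rfl⟩
  induction m generalizing i with
  | zero =>
    exact ⟨i, hi, le_rfl, rfl, fun h => absurd h (by omega)⟩
  | succ m ih =>
    by_cases hmem : 1 < i ∧ s (i - 1) ∈ fingerprint s i j
    · obtain ⟨hi1, hmem⟩ := hmem
      have hfp : fingerprint s (i - 1) j = fingerprint s i j := by
        rw [fingerprint_pred_left s hi (by omega), Finset.insert_eq_self.mpr hmem]
      obtain ⟨k, hk1, hk2, hk3, hk4⟩ := ih (i - 1) (by omega) (by omega) (by omega)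
      exact ⟨k, hk1, by omega, hk3.trans hfp, hk4⟩
    · push_neg at hmem
      exact ⟨i, hi, le_rfl, rfl, fun h => hmem h⟩

/-- Every fingerprint of `s` is the fingerprint of some maximal location;
consequently `|F| ≤ |L|`. -/
theorem fingerprint_eq_maxLoc_fingerprint {α : Type*} [DecidableEq α]
    (s : ℕ → α) (n : ℕ) :
    (∀ f ∈ Fings s n, ∃ k l, IsMaxLoc s n k l ∧ fingerprint s k l = f) ∧
      (Fings s n).ncard ≤ {p : ℕ × ℕ | IsMaxLoc s n p.1 p.2}.ncard := by
  have main : ∀ f ∈ Fings s n, ∃ k l, IsMaxLoc s n k l ∧ fingerprint s k l = f := by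
    rintro f ⟨i, j, hi, hij, hjn, rfl⟩
    obtain ⟨l, hl1, hl2, hl3, hl4⟩ := extend_right s n i j hij hjn
    obtain ⟨k, hk1, hk2, hk3, hk4⟩ := extend_left s i l (by omega) (by omega)
    refine ⟨k, l, ⟨hk1, by omega, hl2, hk4, fun h => ?_⟩, hk3.trans hl3⟩
    rw [hk3]; exact hl4 h
  refine ⟨main, ?_⟩
  classical
  choose k l hml hfp using main
  have hLfin : {p : ℕ × ℕ | IsMaxLoc s n p.1 p.2}.Finite := by
    apply Set.Finite.subset (Set.finite_Icc (1, 1) (n, n))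
    rintro ⟨a, b⟩ ⟨h1, h2, h3, _⟩
    simp only [Set.mem_Icc, Prod.mk_le_mk]
    omega
  set F : Finset α → ℕ × ℕ := fun f =>
    if hf : f ∈ Fings s n then (k f hf, l f hf) else (0, 0) with hF
  apply Set.ncard_le_ncard_of_injOn F ?_ ?_ hLfin
  · intro f hf
    simp only [hF, dif_pos hf]
    exact hml f hf
  · intro f1 h1 f2 h2 heq
    simp only [hF, dif_pos h1, dif_pos h2, Prod.mk.injEq] at heq
    have e1 := hfp f1 h1
    have e2 := hfp f2 h2
    rw [← e1, ← e2, heq.1, heq.2]
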